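/- States with zero mixing entropy are limits of pure states: let Ω ⊂ ℝ^n be a compact convex set and let α ∈ Ω satisfy S(α) = 0. Then α is the limit of a sequence of extreme points of Ω. -/

import Mathlib

open Filter Set Module

/-- Shannon entropy (base 2) of a finite probability vector. -/
noncomputable def shannon {n : ℕ} (p : Fin n → ℝ) : ℝ :=
  ∑ i, -(p i * Real.logb 2 (p i))

/-- Mixing (preparation) entropy of a point `ω` of a convex set `Ω`:
the infimum of the Shannon entropies of the coefficients over all finite
convex decompositions of `ω` into extreme points of `Ω`. -/
noncomputable def mixEnt {V : Type*} [AddCommGroup V] [Module ℝ V]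
    (Ω : Set V) (ω : V) : ℝ :=
  sInf {h : ℝ | ∃ (n : ℕ) (p : Fin n → ℝ) (v : Fin n → V),
    (∀ i, 0 ≤ p i) ∧ (∑ i, p i = 1) ∧ (∀ i, v i ∈ Ω.extremePoints ℝ) ∧
    ω = ∑ i, p i • v i ∧ h = shannon p}


lemma term_nonneg {x : ℝ} (h0 : 0 ≤ x) (h1 : x ≤ 1) : 0 ≤ -(x * Real.logb 2 x) := by
  have := Real.logb_nonpos (b := 2) one_lt_two h0 h1
  nlinarith

lemma shannon_nonneg {m : ℕ} {p : Fin m → ℝ} (h0 : ∀ i, 0 ≤ p i) (h1 : ∑ i, p i = 1) :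
    0 ≤ shannon p := by
  apply Finset.sum_nonneg
  intro i _
  exact term_nonneg (h0 i) (h1 ▸ Finset.single_le_sum (fun j _ => h0 j) (Finset.mem_univ i))

lemma le_term {x : ℝ} (h0 : 0 ≤ x) (h1 : x ≤ 1/2) : x ≤ -(x * Real.logb 2 x) := by
  rcases eq_or_lt_of_le h0 with h | h
  · simp [← h]
  · have h2 : Real.logb 2 x ≤ Real.logb 2 (1/2) := Real.logb_le_logb_of_le one_lt_two h h1
    have h3 : Real.logb 2 (1/2 : ℝ) = -1 := by
      rw [one_div, Real.logb_inv, Real.logb_self_eq_one] <;> norm_num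
    nlinarith

lemma exists_large_coeff {m : ℕ} {p : Fin m → ℝ} (h0 : ∀ i, 0 ≤ p i) (h1 : ∑ i, p i = 1)
    (hs : shannon p < 1/2) : ∃ i, 1 - p i ≤ shannon p := by
  by_cases hex : ∃ i, 1/2 ≤ p i
  · obtain ⟨i, hi⟩ := hex
    refine ⟨i, ?_⟩
    have hsum : ∑ j ∈ Finset.univ.erase i, p j = 1 - p i := by
      have := Finset.add_sum_erase Finset.univ p (Finset.mem_univ i)
      linarith [h1 ▸ this]
    have hple : ∀ j ∈ Finset.univ.erase i, p j ≤ 1/2 := by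
      intro j hj
      have : p j ≤ ∑ k ∈ Finset.univ.erase i, p k :=
        Finset.single_le_sum (fun k _ => h0 k) hj
      linarith
    have hbound : ∑ j ∈ Finset.univ.erase i, p j ≤
        ∑ j ∈ Finset.univ.erase i, -(p j * Real.logb 2 (p j)) :=
      Finset.sum_le_sum fun j hj => le_term (h0 j) (hple j hj)
    have hterm : 0 ≤ -(p i * Real.logb 2 (p i)) :=
      term_nonneg (h0 i) (h1 ▸ Finset.single_le_sum (fun j _ => h0 j) (Finset.mem_univ i))
    have := Finset.add_sum_erase Finset.univ (fun j => -(p j * Real.logb 2 (p j)))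
      (Finset.mem_univ i)
    have hshan : shannon p = -(p i * Real.logb 2 (p i)) +
        ∑ j ∈ Finset.univ.erase i, -(p j * Real.logb 2 (p j)) := this.symm
    linarith
  · exfalso
    push_neg at hex
    have : (1 : ℝ) ≤ shannon p := by
      calc (1:ℝ) = ∑ i, p i := h1.symm
      _ ≤ shannon p := Finset.sum_le_sum fun i _ => le_term (h0 i) (hex i).le
    linarith

lemma boundary_reduce {E : Type} [NormedAddCommGroup E] [NormedSpace ℝ E] [FiniteDimensional ℝ E]
    {d : ℕ} (hd : finrank ℝ E ≤ d + 1)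
    (IH : ∀ (K : Type) [NormedAddCommGroup K] [NormedSpace ℝ K] [FiniteDimensional ℝ K],
      finrank ℝ K ≤ d →
      ∀ Ω : Set K, IsCompact Ω → Convex ℝ Ω → Ω ⊆ convexHull ℝ (Ω.extremePoints ℝ))
    {Ω : Set E} (hcomp : IsCompact Ω) (hconv : Convex ℝ Ω)
    {p v : E} (hp : p ∈ Ω) (hout : ∀ ε : ℝ, 0 < ε → p - ε • v ∉ Ω) :
    p ∈ convexHull ℝ (Ω.extremePoints ℝ) := by
  classical
  -- separating functionals
  have hsep : ∀ k : ℕ, ∃ f : E →L[ℝ] ℝ, ‖f‖ = 1 ∧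
      ∀ a ∈ Ω, f a ≤ f p - ((k : ℝ) + 1)⁻¹ * f v := by
    intro k
    have hkpos : (0 : ℝ) < ((k : ℝ) + 1)⁻¹ := by positivity
    obtain ⟨g, u, hg, hu⟩ :=
      geometric_hahn_banach_closed_point hconv hcomp.isClosed (hout _ hkpos)
    have hgne : g ≠ 0 := by
      intro h
      subst h
      simp at hg hu
      exact absurd (lt_trans (hg p hp) hu) (lt_irrefl _)
    have hgnorm : ‖g‖ ≠ 0 := by simpa using hgne
    refine ⟨‖g‖⁻¹ • g, ?_, ?_⟩
    · exact (norm_smul ‖g‖⁻¹ g).trans (by simp [inv_mul_cancel₀ hgnorm])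
    · intro a ha
      have h1 : g a ≤ g (p - ((k : ℝ) + 1)⁻¹ • v) := le_of_lt (lt_trans (hg a ha) hu)
      have h2 : g (p - ((k : ℝ) + 1)⁻¹ • v) = g p - ((k : ℝ) + 1)⁻¹ * g v := by
        rw [map_sub, map_smul]; rfl
      have hpos : (0 : ℝ) ≤ ‖g‖⁻¹ := by positivity
      have := mul_le_mul_of_nonneg_left (h2 ▸ h1) hpos
      simpa [mul_sub, mul_comm, mul_assoc, mul_left_comm] using this
  choose f hfnorm hfle using hsep
  have hmem : ∀ k, f k ∈ Metric.sphere (0 : E →L[ℝ] ℝ) 1 := by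
    intro k; simpa [mem_sphere_zero_iff_norm] using hfnorm k
  obtain ⟨F, hFsph, φ, hφ, hFtend⟩ := (isCompact_sphere (0 : E →L[ℝ] ℝ) 1).tendsto_subseq hmem
  have heval : ∀ a : E, Tendsto (fun k => f (φ k) a) atTop (nhds (F a)) := by
    intro a
    exact ((ContinuousLinearMap.apply ℝ ℝ a).continuous.tendsto F).comp hFtend
  have hFle : ∀ a ∈ Ω, F a ≤ F p := by
    intro a ha
    have h1 : Tendsto (fun k => f (φ k) p - ((φ k : ℝ) + 1)⁻¹ * f (φ k) v) atTop
        (nhds (F p)) := by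
      have h2 : Tendsto (fun k => ((φ k : ℝ) + 1)⁻¹) atTop (nhds 0) := by
        have := (tendsto_one_div_add_atTop_nhds_zero_nat :
          Tendsto (fun n : ℕ => 1 / ((n : ℝ) + 1)) atTop (nhds 0)).comp hφ.tendsto_atTop
        simpa [one_div, Function.comp_def] using this
      have h3 : Tendsto (fun k => ((φ k : ℝ) + 1)⁻¹ * f (φ k) v) atTop (nhds 0) := by
        simpa using h2.mul (heval v)
      simpa using (heval p).sub h3
    exact le_of_tendsto_of_tendsto' (heval a) h1 fun k => hfle (φ k) a ha
  have hFne : F ≠ 0 := by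
    intro h
    rw [h] at hFsph
    simp at hFsph
  -- the exposed face
  set Fc : Set E := {x ∈ Ω | F x = F p} with hFc
  have hpF : p ∈ Fc := ⟨hp, rfl⟩
  have hexp : IsExposed ℝ Ω Fc := by
    intro _
    refine ⟨F, ?_⟩
    ext x
    constructor
    · rintro ⟨hx, hfx⟩
      exact ⟨hx, fun y hy => hfx ▸ hFle y hy⟩
    · rintro ⟨hx, hall⟩
      exact ⟨hx, le_antisymm (hFle x hx) (hall p hp)⟩
  have hFcconv : Convex ℝ Fc := hexp.convex hconv
  have hFcclosed : IsClosed Fc :=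
    hcomp.isClosed.inter (isClosed_eq F.continuous continuous_const)
  -- kernel of F
  set K := LinearMap.ker (F : E →ₗ[ℝ] ℝ) with hK
  have hrange : LinearMap.range (F : E →ₗ[ℝ] ℝ) = ⊤ := by
    obtain ⟨e, he⟩ : ∃ e : E, F e ≠ 0 := by
      by_contra h
      push_neg at h
      exact hFne (by ext x; simp [h x])
    rw [LinearMap.range_eq_top]
    intro r
    exact ⟨(r / F e) • e, by simp [div_mul_cancel₀ r he]⟩
  have hKrank : finrank ℝ K ≤ d := by
    have h1 := LinearMap.finrank_range_add_finrank_ker (F : E →ₗ[ℝ] ℝ)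
    rw [hrange] at h1
    simp [finrank_top, finrank_self] at h1
    rw [hK]
    omega
  -- affine embedding of K
  set G : K →ᵃ[ℝ] E := AffineMap.mk' (fun w => p + (w : E)) K.subtype 0
    (fun w => by simp [add_comm]) with hG
  have hGcoe : ∀ w : K, G w = p + (w : E) := fun w => rfl
  set F' : Set K := G ⁻¹' Fc with hF'
  have hF'conv : Convex ℝ F' := hFcconv.affine_preimage G
  have hGcont : Continuous G := by
    have : (G : K → E) = fun w : K => p + (w : E) := rfl
    rw [this]
    exact continuous_const.add continuous_subtype_val
  have hF'closed : IsClosed F' := hFcclosed.preimage hGcont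
  obtain ⟨M, hM⟩ := hcomp.isBounded.exists_norm_le
  have hF'bdd : Bornology.IsBounded F' := by
    rw [isBounded_iff_forall_norm_le]
    refine ⟨M + ‖p‖, ?_⟩
    rintro w hw
    have h1 : ‖p + (w : E)‖ ≤ M := hM _ hw.1
    have h2 : ‖(w : E)‖ ≤ M + ‖p‖ := by
      have h3 : ‖p + (w : E) - p‖ ≤ ‖p + (w : E)‖ + ‖p‖ := norm_sub_le _ _
      simp only [add_sub_cancel_left] at h3
      linarith
    exact h2
  have hF'comp : IsCompact F' := Metric.isCompact_of_isClosed_isBounded hF'closed hF'bdd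
  have h0F' : (0 : K) ∈ F' := by
    show G 0 ∈ Fc
    rw [hGcoe]
    simpa using hpF
  have h0hull : (0 : K) ∈ convexHull ℝ (F'.extremePoints ℝ) :=
    IH K hKrank F' hF'comp hF'conv h0F'
  -- push forward
  have himg : G '' (F'.extremePoints ℝ) ⊆ Fc.extremePoints ℝ := by
    rintro _ ⟨w, hw, rfl⟩
    rw [mem_extremePoints] at hw ⊢
    obtain ⟨hwF', hwext⟩ := hw
    refine ⟨hwF', ?_⟩
    intro y₁ hy₁ y₂ hy₂ hseg
    have hmem : ∀ y ∈ Fc, y - p ∈ K := by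
      intro y hy
      have h4 : F y = F p := hy.2
      simp only [hK, LinearMap.mem_ker, map_sub]
      show F y - F p = 0
      rw [h4, sub_self]
    set W₁ : K := ⟨y₁ - p, hmem y₁ hy₁⟩
    set W₂ : K := ⟨y₂ - p, hmem y₂ hy₂⟩
    have hW₁ : W₁ ∈ F' := by
      show G W₁ ∈ Fc
      rw [hGcoe]
      simpa [W₁] using hy₁
    have hW₂ : W₂ ∈ F' := by
      show G W₂ ∈ Fc
      rw [hGcoe]
      simpa [W₂] using hy₂
    have hseg' : w ∈ openSegment ℝ W₁ W₂ := by
      obtain ⟨a, b, ha, hb, hab, habe⟩ := hseg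
      refine ⟨a, b, ha, hb, hab, ?_⟩
      apply Subtype.ext
      push_cast [W₁, W₂]
      rw [hGcoe] at habe
      have : a • (y₁ - p) + b • (y₂ - p) = a • y₁ + b • y₂ - (a + b) • p := by
        simp [smul_sub, add_smul]; abel
      rw [this, hab, habe, one_smul]
      abel
    obtain ⟨e₁, e₂⟩ := hwext W₁ hW₁ W₂ hW₂ hseg'
    constructor
    · rw [hGcoe, ← e₁]; simp [W₁]
    · rw [hGcoe, ← e₂]; simp [W₂]
  have hphull : p ∈ convexHull ℝ (Fc.extremePoints ℝ) := by
    have h1 : G 0 ∈ G '' (convexHull ℝ (F'.extremePoints ℝ)) := mem_image_of_mem G h0hull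
    rw [AffineMap.image_convexHull] at h1
    have h2 : G (0 : K) = p := by rw [hGcoe]; simp
    rw [h2] at h1
    exact convexHull_mono himg h1
  exact convexHull_mono (hexp.isExtreme.extremePoints_subset_extremePoints) hphull

lemma minkowski_aux : ∀ (d : ℕ) (E : Type) [NormedAddCommGroup E] [NormedSpace ℝ E]
    [FiniteDimensional ℝ E], finrank ℝ E ≤ d →
    ∀ Ω : Set E, IsCompact Ω → Convex ℝ Ω → Ω ⊆ convexHull ℝ (Ω.extremePoints ℝ) := by
  intro d
  induction d with
  | zero =>
    intro E _ _ _ hr Ω hcomp hconv x hx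
    have hsub : Subsingleton E := by
      rw [← Module.finrank_zero_iff (R := ℝ)]
      omega
    apply subset_convexHull
    rw [mem_extremePoints]
    exact ⟨hx, fun x₁ h₁ x₂ h₂ _ => ⟨Subsingleton.elim _ _, Subsingleton.elim _ _⟩⟩
  | succ d IH =>
    intro E _ _ _ hr Ω hcomp hconv x hx
    by_cases hsing : ∀ y ∈ Ω, y = x
    · apply subset_convexHull
      rw [mem_extremePoints]
      refine ⟨hx, fun x₁ h₁ x₂ h₂ _ => ⟨hsing x₁ h₁, hsing x₂ h₂⟩⟩
    · push_neg at hsing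
      obtain ⟨y, hy, hyx⟩ := hsing
      set v := y - x with hv
      set T : Set ℝ := {t : ℝ | x + t • v ∈ Ω} with hT
      have hT0 : (0 : ℝ) ∈ T := by simp [hT, hx]
      have hT1 : (1 : ℝ) ∈ T := by simp [hT, hv, hy]
      obtain ⟨M, hM⟩ := hcomp.isBounded.exists_norm_le
      have hvne : v ≠ 0 := sub_ne_zero_of_ne hyx
      have hvpos : 0 < ‖v‖ := norm_pos_iff.2 hvne
      have hTbdd : ∀ t ∈ T, |t| ≤ (M + ‖x‖) / ‖v‖ := by
        intro t ht
        rw [le_div_iff₀ hvpos]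
        have h1 : ‖x + t • v‖ ≤ M := hM _ ht
        have h2 : ‖t • v‖ ≤ ‖x + t • v‖ + ‖x‖ := by
          have h3 : ‖x + t • v - x‖ ≤ ‖x + t • v‖ + ‖x‖ := norm_sub_le _ _
          simpa using h3
        rw [norm_smul] at h2
        simp only [Real.norm_eq_abs] at h2
        linarith
      have hTbddB : BddBelow T ∧ BddAbove T := by
        constructor
        · exact ⟨-((M + ‖x‖) / ‖v‖), fun t ht => by
            have := hTbdd t ht; rw [abs_le] at this; linarith [this.1]⟩
        · exact ⟨(M + ‖x‖) / ‖v‖, fun t ht => by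
            have := hTbdd t ht; rw [abs_le] at this; linarith [this.2]⟩
      have hTclosed : IsClosed T := by
        have : T = (fun t : ℝ => x + t • v) ⁻¹' Ω := rfl
        rw [this]
        exact hcomp.isClosed.preimage (by continuity)
      have hTne : T.Nonempty := ⟨0, hT0⟩
      set a := sInf T with ha
      set b := sSup T with hb
      have haT : a ∈ T := hTclosed.csInf_mem hTne hTbddB.1
      have hbT : b ∈ T := hTclosed.csSup_mem hTne hTbddB.2
      have ha0 : a ≤ 0 := csInf_le hTbddB.1 hT0
      have hb1 : 1 ≤ b := le_csSup hTbddB.2 hT1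
      set p := x + a • v with hp
      set q := x + b • v with hq
      have hpmem : p ∈ convexHull ℝ (Ω.extremePoints ℝ) := by
        apply boundary_reduce hr IH hcomp hconv (v := v) haT
        intro ε hε hmem
        have : a - ε ∈ T := by
          have : x + (a - ε) • v = p - ε • v := by
            rw [hp]; rw [sub_smul]; abel
          simpa [hT, this] using hmem
        have := csInf_le hTbddB.1 this
        linarith
      have hqmem : q ∈ convexHull ℝ (Ω.extremePoints ℝ) := by
        apply boundary_reduce hr IH hcomp hconv (v := -v) hbT
        intro ε hε hmem
        have : b + ε ∈ T := by
          have : x + (b + ε) • v = q - ε • (-v) := by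
            rw [hq, add_smul]
            simp
            abel
          simpa [hT, this] using hmem
        have := le_csSup hTbddB.2 this
        linarith
      have hba : 0 < b - a := by linarith
      have hcomb : x = (b / (b - a)) • p + (-a / (b - a)) • q := by
        rw [hp, hq]
        have hbane : b - a ≠ 0 := ne_of_gt hba
        rw [smul_add, smul_add, smul_smul, smul_smul]
        have h1 : b / (b - a) + -a / (b - a) = 1 := by field_simp; ring
        have h2 : b / (b - a) * a + -a / (b - a) * b = 0 := by field_simp; ring
        calc x = (b / (b - a) + -a / (b - a)) • x +
            (b / (b - a) * a + -a / (b - a) * b) • v := by rw [h1, h2]; simp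
        _ = _ := by rw [add_smul, add_smul]; abel
      rw [hcomb]
      exact (convex_convexHull ℝ _) hpmem hqmem
        (div_nonneg (by linarith) hba.le) (div_nonneg (by linarith) hba.le)
        (by field_simp; ring)


/-- a state of zero mixing entropy is a limit of pure states
(extreme points). -/
theorem limit_of_pure_of_mixEnt_eq_zero {n : ℕ} (Ω : Set (Fin n → ℝ))
    (hconv : Convex ℝ Ω) (hcomp : IsCompact Ω)
    (α : Fin n → ℝ) (hα : α ∈ Ω) (hS : mixEnt Ω α = 0) :
    ∃ u : ℕ → (Fin n → ℝ), (∀ k, u k ∈ Ω.extremePoints ℝ) ∧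
      Filter.Tendsto u Filter.atTop (nhds α) := by
  classical
  obtain ⟨M, hM⟩ := hcomp.isBounded.exists_norm_le
  have hM0 : 0 ≤ M := le_trans (norm_nonneg α) (hM α hα)
  set S : Set ℝ := {h : ℝ | ∃ (m' : ℕ) (p : Fin m' → ℝ) (v : Fin m' → (Fin n → ℝ)),
    (∀ i, 0 ≤ p i) ∧ (∑ i, p i = 1) ∧ (∀ i, v i ∈ Ω.extremePoints ℝ) ∧
    α = ∑ i, p i • v i ∧ h = shannon p} with hSdef
  have hS' : sInf S = 0 := hS
  -- the decomposition set is nonempty, by Minkowski's theorem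
  have hhull : α ∈ convexHull ℝ (Ω.extremePoints ℝ) :=
    minkowski_aux (finrank ℝ (Fin n → ℝ)) _ le_rfl Ω hcomp hconv hα
  rw [mem_convexHull_iff_exists_fintype] at hhull
  obtain ⟨ι, hι, w, z, hw0, hw1, hz, hzsum⟩ := hhull
  set e : Fin (Fintype.card ι) ≃ ι := (Fintype.equivFin ι).symm with he
  have hne : S.Nonempty := by
    refine ⟨shannon (w ∘ e), Fintype.card ι, w ∘ e, z ∘ e, fun i => hw0 _, ?_, fun i => hz _,
      ?_, rfl⟩
    · rw [← hw1]
      exact e.sum_comp w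
    · rw [← hzsum]
      exact (e.sum_comp fun i => w i • z i).symm
  have key : ∀ k : ℕ, ∃ wpt : Fin n → ℝ, wpt ∈ Ω.extremePoints ℝ ∧
      ‖wpt - α‖ ≤ 2 * M * (1 / (2 * ((k : ℝ) + 1))) := by
    intro k
    have hδ : (0 : ℝ) < 1 / (2 * ((k : ℝ) + 1)) := by positivity
    have hlt : sInf S < 1 / (2 * ((k : ℝ) + 1)) := by rw [hS']; exact hδ
    obtain ⟨h, hmem, hh⟩ := exists_lt_of_csInf_lt hne hlt
    obtain ⟨m', p, v, h0, h1, hv, hαeq, rfl⟩ := hmem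
    have hδhalf : 1 / (2 * ((k : ℝ) + 1)) ≤ 1 / 2 := by
      rw [div_le_div_iff₀ (by positivity) (by norm_num)]
      have : (0 : ℝ) ≤ (k : ℝ) := Nat.cast_nonneg k
      nlinarith
    obtain ⟨i, hi⟩ := exists_large_coeff h0 h1 (lt_of_lt_of_le hh hδhalf)
    refine ⟨v i, hv i, ?_⟩
    have hvi : ∀ j, ‖v j‖ ≤ M := fun j => hM _ (extremePoints_subset (hv j))
    have hid : v i - α = ∑ j, p j • (v i - v j) := by
      have h2 : ∑ j, p j • (v i - v j) = (∑ j, p j) • v i - ∑ j, p j • v j := by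
        rw [Finset.sum_smul, ← Finset.sum_sub_distrib]
        exact Finset.sum_congr rfl fun j _ => smul_sub _ _ _
      rw [h2, h1, one_smul, hαeq]
    rw [hid]
    have hsum_erase : ∑ j ∈ Finset.univ.erase i, p j = 1 - p i := by
      have h5 := Finset.add_sum_erase Finset.univ p (Finset.mem_univ i)
      rw [h1] at h5
      linarith
    calc ‖∑ j, p j • (v i - v j)‖ ≤ ∑ j, ‖p j • (v i - v j)‖ := norm_sum_le _ _
      _ = ∑ j, p j * ‖v i - v j‖ := Finset.sum_congr rfl fun j _ => by
          rw [norm_smul, Real.norm_eq_abs, abs_of_nonneg (h0 j)]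
      _ = ∑ j ∈ Finset.univ.erase i, p j * ‖v i - v j‖ := by
          rw [← Finset.add_sum_erase Finset.univ (fun j => p j * ‖v i - v j‖)
            (Finset.mem_univ i)]
          simp
      _ ≤ ∑ j ∈ Finset.univ.erase i, p j * (2 * M) := Finset.sum_le_sum fun j _ => by
          have h6 : ‖v i - v j‖ ≤ ‖v i‖ + ‖v j‖ := norm_sub_le _ _
          exact mul_le_mul_of_nonneg_left (by linarith [hvi i, hvi j]) (h0 j)
      _ = (1 - p i) * (2 * M) := by rw [← Finset.sum_mul, hsum_erase]
      _ ≤ (1 / (2 * ((k : ℝ) + 1))) * (2 * M) :=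
          mul_le_mul_of_nonneg_right (by linarith) (by positivity)
      _ = 2 * M * (1 / (2 * ((k : ℝ) + 1))) := by ring
  choose u hu1 hu2 using key
  refine ⟨u, hu1, ?_⟩
  rw [tendsto_iff_norm_sub_tendsto_zero]
  have hlim : Tendsto (fun k : ℕ => 2 * M * (1 / (2 * ((k : ℝ) + 1)))) atTop (nhds 0) := by
    have h := tendsto_one_div_add_atTop_nhds_zero_nat.const_mul M
    rw [mul_zero] at h
    refine h.congr fun k => ?_
    have hk : ((k : ℝ) + 1) ≠ 0 := by positivity
    field_simp
  exact squeeze_zero (fun k => norm_nonneg _) hu2 hlim
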